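/- Let A be an associative algebra, φ : A^{⊗p} → A a Hochschild cochain and τ : A^{⊗(q+1)} → K a cyclic cochain. Define φ̃(a_0,…,a_{p+q}) = τ(a_0 φ(a_1,…,a_p), a_{p+1},…,a_{p+q}). Then the pairing (φ, τ) ↦ φ̃ is a chain map: b(φ̃) corresponds to the pairing of the Hochschild coboundary δφ with τ whenever τ is a Hochschild cocycle; hence it induces a pairing H^p(A,A) ⊗ HH^q(A) → HH^{p+q}(A). -/

import Mathlib

/- STATEMENT 18: Let A be an associative algebra, φ : A^{⊗p} → A a Hochschild
cochain and τ : A^{⊗(q+1)} → K a cyclic (Hochschild) cochain.  Define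
φ̃(a_0,…,a_{p+q}) = τ(a_0·φ(a_1,…,a_p), a_{p+1},…,a_{p+q}).  Then (φ,τ) ↦ φ̃ is a
chain map: whenever τ is a Hochschild cocycle (bτ = 0), b(φ̃) is exactly the
pairing of the Hochschild coboundary δφ with τ; hence it induces a pairing
H^p(A,A) ⊗ HH^q(A) → HH^{p+q}(A) in cohomology. -/

noncomputable section

variable {K A : Type} [Field K] [Ring A] [Algebra K A]

/-- The pairing `ϕ̃` of an `A`-valued `p`-cochain `ϕ` with a `K`-valued
`(q+1)`-cochain `τ` : `ϕ̃(a_0,…,a_{p+q}) = τ(a_0·ϕ(a_1,…,a_p), a_{p+1},…,a_{p+q})`. -/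
def pairCochain (p q : ℕ) (ϕ : (Fin p → A) → A)
    (τ : MultilinearMap K (fun _ : Fin (q + 1) => A) K) :
    (Fin (p + q + 1) → A) → K := fun a =>
  τ (fun t : Fin (q + 1) =>
    if t.val = 0 then
      a ⟨0, by omega⟩ * ϕ (fun s : Fin p => a ⟨s.val + 1, by have := s.isLt; omega⟩)
    else a ⟨p + t.val, by have := t.isLt; omega⟩)

/-- The Hochschild coboundary `δϕ` of an `A`-valued `p`-cochain. -/
def hDelta (p : ℕ) (ϕ : (Fin p → A) → A) : (Fin (p + 1) → A) → A := fun a =>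
  a ⟨0, by omega⟩ * ϕ (fun s : Fin p => a ⟨s.val + 1, by have := s.isLt; omega⟩)
  + ∑ i ∈ Finset.range p,
      ((-1 : ℤ) ^ (i + 1)) •
        ϕ (fun s : Fin p =>
          if s.val < i then a ⟨s.val, by have := s.isLt; omega⟩
          else if s.val = i then
            a ⟨s.val, by have := s.isLt; omega⟩ * a ⟨s.val + 1, by have := s.isLt; omega⟩
          else a ⟨s.val + 1, by have := s.isLt; omega⟩)
  + ((-1 : ℤ) ^ (p + 1)) •
      (ϕ (fun s : Fin p => a ⟨s.val, by have := s.isLt; omega⟩) * a (Fin.last p))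

/-- The Hochschild boundary-type coboundary `b` of a `K`-valued `(r+1)`-cochain. -/
def hB (r : ℕ) (ψ : (Fin (r + 1) → A) → K) : (Fin (r + 2) → A) → K := fun a =>
  (∑ i ∈ Finset.range (r + 1),
    ((-1 : ℤ) ^ i) •
      ψ (fun s : Fin (r + 1) =>
        if s.val < i then a ⟨s.val, by have := s.isLt; omega⟩
        else if s.val = i then
          a ⟨s.val, by have := s.isLt; omega⟩ * a ⟨s.val + 1, by have := s.isLt; omega⟩
        else a ⟨s.val + 1, by have := s.isLt; omega⟩))
  + ((-1 : ℤ) ^ (r + 1)) •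
      ψ (fun s : Fin (r + 1) =>
        if s.val = 0 then a (Fin.last (r + 1)) * a ⟨0, by omega⟩
        else a ⟨s.val, by have := s.isLt; omega⟩)

private lemma sum_split {M : Type} [AddCommMonoid M] (p q : ℕ) (f : ℕ → M) :
    ∑ i ∈ Finset.range (p + q + 1), f i =
      (∑ i ∈ Finset.range (p + 1), f i) + ∑ j ∈ Finset.range q, f (p + 1 + j) := by
  rw [Finset.range_eq_Ico,
    ← Finset.sum_Ico_consecutive f (Nat.zero_le (p+1)) (by omega : p+1 ≤ p+q+1)]
  congr 1
  · rw [Finset.range_eq_Ico]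
  rw [Finset.sum_Ico_eq_sum_range, show p+q+1-(p+1) = q by omega, Finset.range_eq_Ico]

private lemma a_congr {n : ℕ} (a : Fin n → A) {i j : ℕ} (hi : i < n) (hj : j < n) (h : i = j) :
    a ⟨i, hi⟩ = a ⟨j, hj⟩ := by subst h; rfl

private lemma tau_congr {q : ℕ} (τ : MultilinearMap K (fun _ : Fin (q + 1) => A) K)
    (f : Fin (q + 1) → A) (m : Fin (q + 1) → A)
    (hs : ∀ t : Fin (q + 1), t.val ≠ 0 → f t = m t) :
    τ f = τ.toLinearMap m 0 (f 0) := by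
  classical
  rw [MultilinearMap.toLinearMap_apply]
  congr 1
  funext t
  by_cases ht : t = 0
  · subst ht; simp
  · rw [Function.update_of_ne ht]
    exact hs t (fun hc => ht (Fin.ext hc))

/-- face maps -/
private def dT (n : ℕ) (a : Fin (n + 2) → A) (i : ℕ) : Fin (n + 1) → A := fun s =>
  if s.val < i then a ⟨s.val, by have := s.isLt; omega⟩
  else if s.val = i then
    a ⟨s.val, by have := s.isLt; omega⟩ * a ⟨s.val + 1, by have := s.isLt; omega⟩
  else a ⟨s.val + 1, by have := s.isLt; omega⟩

private def cT (n : ℕ) (a : Fin (n + 2) → A) : Fin (n + 1) → A := fun s =>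
  if s.val = 0 then a (Fin.last (n + 1)) * a ⟨0, by omega⟩
  else a ⟨s.val, by have := s.isLt; omega⟩

private def pT (p q : ℕ) (ϕ : (Fin p → A) → A) (b : Fin (p + q + 1) → A) :
    Fin (q + 1) → A := fun t =>
  if t.val = 0 then
    b ⟨0, by omega⟩ * ϕ (fun s : Fin p => b ⟨s.val + 1, by have := s.isLt; omega⟩)
  else b ⟨p + t.val, by have := t.isLt; omega⟩

private def xT (p q : ℕ) (ϕ : (Fin p → A) → A) (a : Fin (p + q + 2) → A) :
    Fin (q + 2) → A := fun t =>
  if t.val = 0 then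
    a ⟨0, by omega⟩ * ϕ (fun s : Fin p => a ⟨s.val + 1, by have := s.isLt; omega⟩)
  else a ⟨p + t.val, by have := t.isLt; omega⟩

private def mT (p q : ℕ) (a : Fin (p + q + 2) → A) : Fin (q + 1) → A := fun t =>
  a ⟨p + 1 + t.val, by have := t.isLt; omega⟩

section Matchings
variable {p q : ℕ} (φ : MultilinearMap K (fun _ : Fin p => A) A)
  (τ : MultilinearMap K (fun _ : Fin (q + 1) => A) K) (a : Fin (p + q + 2) → A)

private lemma xT0 {p q : ℕ} (ϕ : (Fin p → A) → A) (a : Fin (p + q + 2) → A)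
    (h : (0:ℕ) < q + 2) :
    xT p q ϕ a ⟨0, h⟩ =
      a ⟨0, by omega⟩ * ϕ (fun s : Fin p => a ⟨s.val + 1, by have := s.isLt; omega⟩) := if_pos rfl

private lemma xTval {p q : ℕ} (ϕ : (Fin p → A) → A) (a : Fin (p + q + 2) → A)
    (k : ℕ) (hk : k ≠ 0) (h : k < q + 2) :
    xT p q ϕ a ⟨k, h⟩ = a ⟨p + k, by omega⟩ := if_neg hk

variable {p q : ℕ} (φ : MultilinearMap K (fun _ : Fin p => A) A)
  (τ : MultilinearMap K (fun _ : Fin (q + 1) => A) K) (a : Fin (p + q + 2) → A)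

private lemma M0 :
    τ (pT p q (fun x => φ x) (dT (p + q) a 0)) =
      τ.toLinearMap (mT p q a) 0
        (a ⟨0, by omega⟩ *
          (a ⟨1, by omega⟩ * φ (fun s : Fin p => a ⟨s.val + 2, by have := s.isLt; omega⟩))) := by
  rw [tau_congr τ _ (mT p q a) (by
    intro t ht
    simp only [pT, mT, if_neg ht, dT]
    rw [if_neg (by omega), if_neg (by omega)]
    exact a_congr a _ _ (by omega))]
  congr 1
  simp only [pT, dT, Fin.val_zero, Nat.lt_irrefl, reduceIte, Fin.val_mk]
  rw [mul_assoc]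
  congr 1

private lemma Mi (i : ℕ) (hi : i < p) :
    τ (pT p q (fun x => φ x) (dT (p + q) a (i + 1))) =
      τ.toLinearMap (mT p q a) 0
        (a ⟨0, by omega⟩ *
          φ (fun s : Fin p =>
            if s.val < i then a ⟨s.val + 1, by have := s.isLt; omega⟩
            else if s.val = i then
              a ⟨s.val + 1, by have := s.isLt; omega⟩ * a ⟨s.val + 2, by have := s.isLt; omega⟩
            else a ⟨s.val + 2, by have := s.isLt; omega⟩)) := by
  rw [tau_congr τ _ (mT p q a) (by
    intro t ht
    simp only [pT, mT, if_neg ht, dT]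
    rw [if_neg (by omega), if_neg (by omega)]
    exact a_congr a _ _ (by omega))]
  congr 1
  simp only [pT, dT, Fin.val_zero, Nat.zero_lt_succ, reduceIte, Fin.val_mk]
  congr 2
  funext s
  split_ifs <;> first | rfl | omega

private lemma M3 :
    τ (dT q (xT p q (fun x => φ x) a) 0) =
      τ.toLinearMap (mT p q a) 0
        (a ⟨0, by omega⟩ *
          (φ (fun s : Fin p => a ⟨s.val + 1, by have := s.isLt; omega⟩) *
            a ⟨p + 1, by omega⟩)) := by
  rw [tau_congr τ _ (mT p q a) (by
    intro t ht
    simp only [dT, mT]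
    rw [if_neg (by omega), if_neg ht, xTval _ a _ (by omega)]
    exact a_congr a _ _ (by omega))]
  congr 1
  simp only [dT, xT, Fin.val_zero, Nat.lt_irrefl, reduceIte, Fin.val_mk]
  rw [mul_assoc]
  congr 1

private lemma M4 (j : ℕ) :
    τ (pT p q (fun x => φ x) (dT (p + q) a (p + 1 + j))) =
      τ (dT q (xT p q (fun x => φ x) a) (j + 1)) := by
  congr 1
  funext t
  by_cases ht : t.val = 0
  · simp only [pT, dT, xT, ht, Nat.zero_lt_succ, reduceIte, Fin.val_mk]
    rw [if_pos (show 0 < p + 1 + j by omega)]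
    congr 2
    funext s
    rw [if_pos (by have := s.isLt; omega)]
  · simp only [pT, dT, if_neg ht, Fin.val_mk]
    rw [xTval _ a _ ht, xTval _ a _ (by omega)]
    split_ifs <;>
      first
      | rfl
      | omega
      | exact a_congr a _ _ (by omega)
      | (congr 1 <;> exact a_congr a _ _ (by omega))

private lemma M5 :
    τ (pT p q (fun x => φ x) (cT (p + q) a)) =
      τ (cT q (xT p q (fun x => φ x) a)) := by
  congr 1
  funext t
  by_cases ht : t.val = 0
  · simp only [pT, cT, ht, reduceIte, Fin.val_mk,
      show Fin.last (p + q + 1) = ⟨p + q + 1, by omega⟩ from rfl,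
      show Fin.last (q + 1) = (⟨q + 1, by omega⟩ : Fin (q + 2)) from rfl]
    rw [xTval _ a _ (by omega), xT0]
    rw [mul_assoc]
    congr 1
  · simp only [pT, cT, if_neg ht, Fin.val_mk]
    rw [if_neg (by omega), xTval _ a _ ht]


end Matchings

theorem cup_pairing_is_chain_map (K A : Type) [Field K] [CharZero K] [Ring A] [Algebra K A]
    (p q : ℕ)
    (φ : MultilinearMap K (fun _ : Fin p => A) A)
    (τ : MultilinearMap K (fun _ : Fin (q + 1) => A) K)
    -- τ is a Hochschild cocycle: bτ = 0
    (hτ : ∀ a : Fin (q + 2) → A, hB q (fun x => τ x) a = 0) :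
    -- b(φ̃) = (δφ)  ̃ (the pairing of δφ with τ)
    ∀ a : Fin (p + q + 2) → A,
      hB (p + q) (pairCochain p q (fun x => φ x) τ) a =
        pairCochain (p + 1) q (hDelta p (fun x => φ x)) τ
          (fun t : Fin (p + 1 + q + 1) => a ⟨t.val, by have := t.isLt; omega⟩) := by
  intro a
  classical
  show (∑ i ∈ Finset.range (p + q + 1),
          ((-1 : ℤ) ^ i) • τ (pT p q (fun x => φ x) (dT (p + q) a i)))
        + ((-1 : ℤ) ^ (p + q + 1)) • τ (pT p q (fun x => φ x) (cT (p + q) a)) =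
      τ (pT (p + 1) q (hDelta p (fun x => φ x))
          (fun t : Fin (p + 1 + q + 1) => a ⟨t.val, by have := t.isLt; omega⟩))
  -- the cocycle identity for τ applied to the tuple x
  have hx : (∑ j ∈ Finset.range (q + 1),
        ((-1 : ℤ) ^ j) • τ (dT q (xT p q (fun x => φ x) a) j))
      + ((-1 : ℤ) ^ (q + 1)) • τ (cT q (xT p q (fun x => φ x) a)) = 0 :=
    hτ (xT p q (fun x => φ x) a)
  rw [Finset.sum_range_succ'] at hx
  rw [M3 φ τ a] at hx
  -- rewrite the right-hand side via multilinearity in slot 0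
  conv_rhs => rw [tau_congr τ _ (mT p q a) (by
    intro t ht
    simp only [pT, mT, if_neg ht])]
  have hv : pT (p + 1) q (hDelta p (fun x => φ x))
        (fun t : Fin (p + 1 + q + 1) => a ⟨t.val, by have := t.isLt; omega⟩) 0 =
      a ⟨0, by omega⟩ * hDelta p (fun x => φ x)
        (fun s : Fin (p + 1) => a ⟨s.val + 1, by have := s.isLt; omega⟩) := by
    simp [pT]
  have hDeq : hDelta p (fun x => φ x)
        (fun s : Fin (p + 1) => a ⟨s.val + 1, by have := s.isLt; omega⟩) =
      a ⟨1, by omega⟩ * φ (fun s : Fin p => a ⟨s.val + 2, by have := s.isLt; omega⟩)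
      + (∑ i ∈ Finset.range p, ((-1 : ℤ) ^ (i + 1)) •
          φ (fun s : Fin p =>
            if s.val < i then a ⟨s.val + 1, by have := s.isLt; omega⟩
            else if s.val = i then
              a ⟨s.val + 1, by have := s.isLt; omega⟩ * a ⟨s.val + 2, by have := s.isLt; omega⟩
            else a ⟨s.val + 2, by have := s.isLt; omega⟩))
      + ((-1 : ℤ) ^ (p + 1)) •
          (φ (fun s : Fin p => a ⟨s.val + 1, by have := s.isLt; omega⟩) *
            a ⟨p + 1, by omega⟩) := rfl
  rw [hv, hDeq, mul_add, mul_add, Finset.mul_sum, map_add, map_add, map_sum]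
  simp only [mul_smul_comm, map_zsmul]
  -- split the left-hand sum
  rw [sum_split p q, Finset.sum_range_succ']
  simp only [pow_zero, one_smul]
  rw [M0 φ τ a, M5 φ τ a]
  -- head sum matches term by term
  have hSum1 : (∑ i ∈ Finset.range p,
        ((-1 : ℤ) ^ (i + 1)) • τ (pT p q (fun x => φ x) (dT (p + q) a (i + 1)))) =
      ∑ i ∈ Finset.range p, ((-1 : ℤ) ^ (i + 1)) •
        τ.toLinearMap (mT p q a) 0
          (a ⟨0, by omega⟩ *
            φ (fun s : Fin p =>
              if s.val < i then a ⟨s.val + 1, by have := s.isLt; omega⟩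
              else if s.val = i then
                a ⟨s.val + 1, by have := s.isLt; omega⟩ * a ⟨s.val + 2, by have := s.isLt; omega⟩
              else a ⟨s.val + 2, by have := s.isLt; omega⟩)) :=
    Finset.sum_congr rfl (fun i hi => by rw [Mi φ τ a i (Finset.mem_range.mp hi)])
  rw [hSum1]
  -- tail sum: pull out (-1)^p and match with hx
  have hSum2 : (∑ j ∈ Finset.range q,
        ((-1 : ℤ) ^ (p + 1 + j)) • τ (pT p q (fun x => φ x) (dT (p + q) a (p + 1 + j)))) =
      ((-1 : ℤ) ^ p) • ∑ j ∈ Finset.range q,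
        ((-1 : ℤ) ^ (j + 1)) • τ (dT q (xT p q (fun x => φ x) a) (j + 1)) := by
    rw [Finset.smul_sum]
    refine Finset.sum_congr rfl (fun j hj => ?_)
    rw [M4 φ τ a j, smul_smul, ← pow_add]
    congr 2
    omega
  rw [hSum2]
  simp only [zsmul_eq_mul] at hx ⊢
  push_cast at hx ⊢
  linear_combination ((-1 : K) ^ p) * hx
end
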